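/- In ℚ₂, the norm group N(-1) := Norm(ℚ₂(√-1)^×) is the subgroup of ℚ₂^× generated by 2, 5, and the squares (ℚ₂^×)²; in particular -1 is not a sum of two squares in ℚ₂. -/

import Mathlib

lemma norm2 : ‖(2:ℤ_[2])‖ = 2⁻¹ := by
  have := PadicInt.norm_p (p := 2)
  norm_num at this
  rw [this]; norm_num

lemma norm8k (k : ℤ_[2]) : ‖(8*k : ℤ_[2])‖ ≤ 8⁻¹ := by
  have h8 : (8:ℤ_[2]) = 2^3 := by norm_num
  calc ‖(8*k : ℤ_[2])‖ = ‖(8:ℤ_[2])‖ * ‖k‖ := norm_mul _ _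
  _ ≤ ‖(8:ℤ_[2])‖ * 1 := by gcongr; exact PadicInt.norm_le_one k
  _ = 8⁻¹ := by
      rw [mul_one, h8, norm_pow (2:ℤ_[2]) 3, norm2]
      norm_num

lemma sq_of_one_add_eight (k : ℤ_[2]) : ∃ z : ℤ_[2], z ≠ 0 ∧ z^2 = 1 + 8*k := by
  have hF := hensels_lemma (p := 2) (F := Polynomial.X^2 - Polynomial.C (1 + 8*k)) (a := 1) ?_
  · obtain ⟨z, hz, -⟩ := hF
    simp [Polynomial.eval_sub, sub_eq_zero] at hz
    refine ⟨z, ?_, hz⟩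
    intro h0
    rw [h0] at hz
    have h1 : (8*k : ℤ_[2]) = -1 := by linear_combination -hz
    have := norm8k k
    rw [h1] at this
    simp at this
    norm_num at this
  · have hd : (Polynomial.X^2 - Polynomial.C (1 + 8*k) : Polynomial ℤ_[2]).derivative = Polynomial.C 2 * Polynomial.X := by
      simp [Polynomial.derivative_pow]
    rw [hd]
    simp only [Polynomial.aeval_sub, Polynomial.aeval_X_pow, Polynomial.aeval_mul, Polynomial.aeval_C,
      Polynomial.aeval_X, Algebra.algebraMap_self, RingHom.id_apply, one_pow, mul_one]
    have h2 : (1 : ℤ_[2]) - (1 + 8*k) = -(8*k) := by ring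
    rw [h2, norm_neg, norm2]
    calc ‖(8*k:ℤ_[2])‖ ≤ 8⁻¹ := norm8k k
    _ < ((2:ℝ)⁻¹)^2 := by norm_num


open PadicInt in
lemma cong16 (s : ℤ_[2]) (E : ℕ) (h : PadicInt.toZModPow 4 s = (E : ZMod (2^4))) :
    ∃ k : ℤ_[2], s = (E : ℤ_[2]) + 16 * k := by
  have hm : s - (E:ℤ_[2]) ∈ RingHom.ker (PadicInt.toZModPow (p := 2) 4) := by
    rw [RingHom.mem_ker, map_sub, h, map_natCast, sub_self]
  rw [PadicInt.ker_toZModPow, Ideal.mem_span_singleton] at hm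
  obtain ⟨k, hk⟩ := hm
  refine ⟨k, ?_⟩
  have h16 : ((2:ℤ_[2]))^4 = 16 := by norm_num
  have hp : ((2:ℕ):ℤ_[2]) = 2 := by norm_cast
  rw [hp, h16] at hk
  linear_combination hk

lemma unit_sq_mod16 (u : ℤ_[2]) (hu : IsUnit u) :
    PadicInt.toZModPow 4 (u^2) = 1 ∨ PadicInt.toZModPow 4 (u^2) = 9 := by
  have h := hu.map (PadicInt.toZModPow (p := 2) 4)
  have key : ∀ a : ZMod (2^4), IsUnit a → a^2 = 1 ∨ a^2 = 9 := by decide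
  rw [map_pow]
  exact key _ h






lemma lemB (u v : ℤ_[2]) (hu : IsUnit u) (hv : IsUnit v) (c : ℕ) :
    ∃ (i j : ℕ) (k : ℤ_[2]), 5^j * (u^2 + 4^c * v^2) = 2^i * (1 + 8*k) := by
  set φ := PadicInt.toZModPow (p := 2) 4 with hφ
  have hA := unit_sq_mod16 u hu
  have hB := unit_sq_mod16 v hv
  set s := u^2 + 4^c * v^2 with hsdef
  simp only [map_pow] at hA hB
  have hs : φ s = (φ u)^2 + (4 : ZMod (2^4))^c * (φ v)^2 := by
    simp only [hsdef, map_add, map_mul, map_pow, map_ofNat]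
  have h4 : (4:ZMod (2^4))^c = 1 ∨ (4:ZMod (2^4))^c = 4 ∨ (4:ZMod (2^4))^c = 0 := by
    match c with
    | 0 => left; rfl
    | 1 => right; left; exact pow_one _
    | (n+2) =>
      right; right
      have h44 : (4:ZMod (2^4)) * 4 = 0 := by decide
      calc (4:ZMod (2^4))^(n+2) = 4^n * (4*4) := by ring
      _ = 0 := by rw [h44, mul_zero]
  have key : φ s = ((1:ℕ) : ZMod (2^4)) ∨ φ s = ((9:ℕ) : ZMod (2^4)) ∨
      φ s = ((2:ℕ) : ZMod (2^4)) ∨ φ s = ((10:ℕ) : ZMod (2^4)) ∨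
      φ s = ((5:ℕ) : ZMod (2^4)) ∨ φ s = ((13:ℕ) : ZMod (2^4)) := by
    rw [hs]
    rcases h4 with h|h|h <;> rcases hA with ha|ha <;> rcases hB with hb|hb <;>
      rw [h, ha, hb] <;> decide
  rcases key with h|h|h|h|h|h
  · obtain ⟨k, hk⟩ := cong16 s 1 h
    exact ⟨0, 0, 2*k, by rw [hk]; push_cast; ring⟩
  · obtain ⟨k, hk⟩ := cong16 s 9 h
    exact ⟨0, 0, 1+2*k, by rw [hk]; push_cast; ring⟩
  · obtain ⟨k, hk⟩ := cong16 s 2 h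
    exact ⟨1, 0, k, by rw [hk]; push_cast; ring⟩
  · obtain ⟨k, hk⟩ := cong16 s 10 h
    exact ⟨1, 1, 3+5*k, by rw [hk]; push_cast; ring⟩
  · obtain ⟨k, hk⟩ := cong16 s 5 h
    exact ⟨0, 1, 3+10*k, by rw [hk]; push_cast; ring⟩
  · obtain ⟨k, hk⟩ := cong16 s 13 h
    exact ⟨0, 1, 8+10*k, by rw [hk]; push_cast; ring⟩






lemma five_ne : (5 : ℚ_[2]) ≠ 0 := by
  intro h
  have : ((5:ℤ) : ℚ_[2]) = 0 := by exact_mod_cast h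
  rw [← norm_eq_zero] at h
  have h1 : ‖(5:ℚ_[2])‖ = 0 := h
  have h2 : ‖((5:ℤ):ℚ_[2])‖ ≤ 1 := Padic.norm_int_le_one 5
  norm_num at h1

lemma lemC (a b : ℤ_[2]) (ha : a ≠ 0) (hb : b ≠ 0)
    (hle : a.valuation ≤ b.valuation) :
    ∃ (i j : ℕ) (z : ℚ_[2]), z ≠ 0 ∧ ((a:ℚ_[2])^2 + (b:ℚ_[2])^2) = 2^i * 5^j * z^2 := by
  set α := a.valuation with hα
  set β := b.valuation with hβ
  have hA := PadicInt.unitCoeff_spec ha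
  have hB := PadicInt.unitCoeff_spec hb
  set u := (PadicInt.unitCoeff ha : ℤ_[2]) with hudef
  set v := (PadicInt.unitCoeff hb : ℤ_[2]) with hvdef
  have hu : IsUnit u := (PadicInt.unitCoeff ha).isUnit
  have hv : IsUnit v := (PadicInt.unitCoeff hb).isUnit
  have hp : ((2:ℕ):ℤ_[2]) = 2 := by norm_cast
  rw [← hα] at hA
  rw [← hβ] at hB
  set c := β - α with hc
  have hβeq : β = α + c := by omega
  have hs : a^2 + b^2 = (2:ℤ_[2])^(2*α) * (u^2 + 4^c * v^2) := by
    rw [hA, hB, hp, hβeq]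
    have h4 : (4:ℤ_[2]) = 2^2 := by norm_num
    rw [h4, ← pow_mul]
    ring
  obtain ⟨i, j, k, hijk⟩ := lemB u v hu hv c
  obtain ⟨z, hz0, hz⟩ := sq_of_one_add_eight k
  rw [← hz] at hijk
  refine ⟨2*α + i, j, (z:ℚ_[2]) / 5^j, ?_, ?_⟩
  · apply div_ne_zero
    · exact PadicInt.coe_ne_zero.mpr hz0
    · exact pow_ne_zero _ five_ne
  · have hsQ : ((a:ℚ_[2]))^2 + (b:ℚ_[2])^2 = (2:ℚ_[2])^(2*α) * ((u:ℚ_[2])^2 + 4^c * (v:ℚ_[2])^2) := by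
      exact_mod_cast congrArg (fun t : ℤ_[2] => (t : ℚ_[2])) hs
    have hijkQ : (5:ℚ_[2])^j * ((u:ℚ_[2])^2 + 4^c * (v:ℚ_[2])^2) = 2^i * (z:ℚ_[2])^2 := by
      exact_mod_cast congrArg (fun t : ℤ_[2] => (t : ℚ_[2])) hijk
    rw [hsQ]
    have h5 : (5:ℚ_[2])^j ≠ 0 := pow_ne_zero _ five_ne
    field_simp
    linear_combination ((2:ℚ_[2])^(2*α)) * hijkQ






lemma normQ2 : ‖(2:ℚ_[2])‖ = 2⁻¹ := by
  have := Padic.norm_p (p := 2)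
  norm_num at this
  rw [this]; norm_num

-- put any element into ℤ_[2] after scaling by a power of 2
lemma intpart (u : ℚ_[2]) : ∃ (m : ℕ) (a : ℤ_[2]), (a : ℚ_[2]) = 2^m * u := by
  obtain ⟨n, hn⟩ := pow_unbounded_of_one_lt ‖u‖ (by norm_num : (1:ℝ) < 2)
  have h : ‖(2:ℚ_[2])^n * u‖ ≤ 1 := by
    rw [norm_mul, norm_pow, normQ2]
    calc (2⁻¹:ℝ)^n * ‖u‖ ≤ (2⁻¹:ℝ)^n * 2^n := by gcongr
    _ = 1 := by rw [← mul_pow]; norm_num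
  exact ⟨n, ⟨_, h⟩, rfl⟩

lemma forward (x : ℚ_[2]) (hx0 : x ≠ 0) (u v : ℚ_[2]) (hx : x = u^2 + v^2) :
    ∃ (i j : ℕ) (z : ℚ_[2]), z ≠ 0 ∧ x = 2^i * 5^j * z^2 := by
  obtain ⟨m1, a1, ha1⟩ := intpart u
  obtain ⟨m2, b1, hb1⟩ := intpart v
  -- common scaling m = m1 + m2
  set m := m1 + m2 with hm
  set a : ℤ_[2] := a1 * 2^m2 with hadef
  set b : ℤ_[2] := b1 * 2^m1 with hbdef
  have c2 : ((2:ℤ_[2]):ℚ_[2]) = 2 := by norm_cast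
  have ha : (a : ℚ_[2]) = 2^m * u := by push_cast [hadef, ha1, c2]; ring
  have hb : (b : ℚ_[2]) = 2^m * v := by push_cast [hbdef, hb1, c2]; ring
  have h2 : (2:ℚ_[2]) ≠ 0 := two_ne_zero
  have key : ∀ (i j : ℕ) (z : ℚ_[2]), z ≠ 0 → ((a:ℚ_[2])^2 + (b:ℚ_[2])^2) = 2^i * 5^j * z^2 →
      ∃ (i' j' : ℕ) (z' : ℚ_[2]), z' ≠ 0 ∧ x = 2^i' * 5^j' * z'^2 := by
    intro i j z hz hzz
    refine ⟨i, j, z / 2^m, div_ne_zero hz (pow_ne_zero _ h2), ?_⟩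
    have hxs : (2:ℚ_[2])^(2*m) * x = 2^i * 5^j * z^2 := by
      rw [← hzz, ha, hb, hx]; ring
    field_simp
    linear_combination hxs
  by_cases ha0 : a = 0
  · -- u = 0
    have hu0 : u = 0 := by
      have : (a:ℚ_[2]) = 0 := by rw [ha0]; norm_cast
      rw [ha] at this
      exact (mul_eq_zero.mp this).resolve_left (pow_ne_zero _ h2)
    refine ⟨0, 0, v, ?_, by rw [hx, hu0]; ring⟩
    intro h; rw [hx, hu0, h] at hx0; simp at hx0
  · by_cases hb0 : b = 0
    · have hv0 : v = 0 := by
        have : (b:ℚ_[2]) = 0 := by rw [hb0]; norm_cast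
        rw [hb] at this
        exact (mul_eq_zero.mp this).resolve_left (pow_ne_zero _ h2)
      refine ⟨0, 0, u, ?_, by rw [hx, hv0]; ring⟩
      intro h; rw [hx, hv0, h] at hx0; simp at hx0
    · rcases le_total a.valuation b.valuation with hle | hle
      · obtain ⟨i, j, z, hz, hzz⟩ := lemC a b ha0 hb0 hle
        exact key i j z hz hzz
      · obtain ⟨i, j, z, hz, hzz⟩ := lemC b a hb0 ha0 hle
        exact key i j z hz (by rw [← hzz]; ring)

lemma backward (i j : ℕ) (z : ℚ_[2]) :
    ∃ u v : ℚ_[2], 2^i * 5^j * z^2 = u^2 + v^2 := by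
  induction i with
  | zero =>
    induction j with
    | zero => exact ⟨z, 0, by ring⟩
    | succ j ih =>
      obtain ⟨u, v, huv⟩ := ih
      exact ⟨u + 2*v, 2*u - v, by rw [pow_succ]; linear_combination 5 * huv⟩
  | succ i ih =>
    obtain ⟨u, v, huv⟩ := ih
    exact ⟨u + v, u - v, by rw [pow_succ]; linear_combination 2 * huv⟩






lemma norm5 : ‖(5:ℚ_[2])‖ = 1 := by
  have hcast : ((5:ℤ):ℚ_[2]) = 5 := by norm_cast
  apply le_antisymm
  · have := Padic.norm_int_le_one (p := 2) 5
    rwa [hcast] at this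
  · by_contra hlt
    push_neg at hlt
    rw [← hcast] at hlt
    have := (Padic.norm_intCast_lt_one_iff (p := 2) (k := 5)).mp hlt
    norm_num at this

lemma part2 : ¬ ∃ u v : ℚ_[2], (-1 : ℚ_[2]) = u^2 + v^2 := by
  rintro ⟨u, v, h⟩
  obtain ⟨i, j, z, hz, he⟩ := forward (-1) (by norm_num) u v h
  set n := z.valuation with hn
  have hzn : ‖z‖ = (2:ℝ)^(-n) := by
    have := Padic.norm_eq_zpow_neg_valuation hz
    rw [← hn] at this
    exact_mod_cast this
  have h1 : (1:ℝ) = (2:ℝ)^(-(i:ℤ) - 2*n) := by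
    have : ‖(-1:ℚ_[2])‖ = ‖(2:ℚ_[2])^i * 5^j * z^2‖ := by rw [← he]
    rw [norm_neg, norm_one, norm_mul, norm_mul, norm_pow, norm_pow, norm_pow, normQ2, norm5, hzn] at this
    rw [this, one_pow, mul_one]
    rw [show ((2⁻¹:ℝ)) = (2:ℝ)^(-1:ℤ) by norm_num]
    rw [← zpow_natCast ((2:ℝ)^(-1:ℤ)) i, ← zpow_mul, ← zpow_natCast ((2:ℝ)^(-n)) 2, ← zpow_mul,
      ← zpow_add₀ (by norm_num : (2:ℝ) ≠ 0)]
    congr 1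
    push_cast
    ring
  have h2 : -(i:ℤ) - 2*n = 0 := by
    have := zpow_right_injective₀ (by norm_num : (0:ℝ) < 2) (by norm_num : (2:ℝ) ≠ 1)
      (h1.symm.trans (zpow_zero (2:ℝ)).symm)
    exact this
  have hnneg : -n ≥ 0 := by omega
  set m : ℕ := (-n).toNat with hm
  have hmn : (m:ℤ) = -n := Int.toNat_of_nonneg hnneg
  have him : i = 2*m := by omega
  -- w
  set w : ℚ_[2] := 2^m * z with hw
  have hwn : ‖w‖ = 1 := by
    rw [hw, norm_mul, norm_pow, normQ2, hzn]
    rw [show ((2⁻¹:ℝ)) = (2:ℝ)^(-1:ℤ) by norm_num, ← zpow_natCast ((2:ℝ)^(-1:ℤ)) m,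
      ← zpow_mul, ← zpow_add₀ (by norm_num : (2:ℝ) ≠ 0)]
    rw [show (-1 * (m:ℤ) + -n) = 0 by omega]
    exact zpow_zero 2
  set w' : ℤ_[2] := ⟨w, le_of_eq hwn⟩ with hw'
  have hwu : IsUnit w' := PadicInt.isUnit_iff.mpr hwn
  have heZ : (-1 : ℤ_[2]) = 5^j * w'^2 := by
    apply Subtype.coe_injective
    push_cast
    rw [show ((5:ℤ_[2]):ℚ_[2]) = 5 from by norm_cast, he, him]; change _ = 5 ^ j * w ^ 2; rw [hw]
    ring
  have := congrArg (PadicInt.toZModPow (p := 2) 2) heZ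
  rw [map_neg, map_one, map_mul, map_pow, map_pow, map_ofNat] at this
  have h5 : (5 : ZMod (2^2)) = 1 := by decide
  have hsq : ∀ a : ZMod (2^2), IsUnit a → a^2 = 1 := by decide
  rw [h5, one_pow, one_mul, hsq _ (hwu.map _)] at this
  exact absurd this (by decide)


/-- In ℚ₂ the norm group N(-1) = Norm(ℚ₂(√-1)ˣ), i.e. the set of nonzero
sums of two squares, is the subgroup of ℚ₂ˣ generated by 2, 5 and the
squares; in particular -1 is not a sum of two squares in ℚ₂. -/
theorem stmt_3 :
    ({x : ℚ_[2] | x ≠ 0 ∧ ∃ u v : ℚ_[2], x = u ^ 2 + v ^ 2} =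
      {x : ℚ_[2] | ∃ (i j : ℕ) (z : ℚ_[2]), z ≠ 0 ∧ x = 2 ^ i * 5 ^ j * z ^ 2}) ∧
    ¬ ∃ u v : ℚ_[2], (-1 : ℚ_[2]) = u ^ 2 + v ^ 2 := by
  constructor
  · ext x
    simp only [Set.mem_setOf_eq]
    constructor
    · rintro ⟨hx0, u, v, hx⟩
      exact forward x hx0 u v hx
    · rintro ⟨i, j, z, hz, rfl⟩
      exact ⟨mul_ne_zero (mul_ne_zero (pow_ne_zero _ two_ne_zero) (pow_ne_zero _ five_ne))
        (pow_ne_zero _ hz), backward i j z⟩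
  · exact part2
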